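/- Let g be a Lie 2-algebra with standard maximal torus t and let ξ, η ∈ Δ be t-roots. If g_ξ^{[2]} is not contained in ker(η) (where η is extended to h by η|_n = 0), then dim(g_η) = dim(g_{ξ+η}). -/
import Mathlib


/-- A 2-map on a Lie algebra over the field `F` (char 2 version of a restricted structure):
`(c • x)^[2] = c^2 • x^[2]`, `ad (x^[2]) = (ad x) ∘ (ad x)` and
`(x+y)^[2] = x^[2] + y^[2] + [x,y]`. -/
structure IsTwoMap (F : Type*) [Field F] {g : Type*} [LieRing g] [LieAlgebra F g]
    (p : g → g) : Prop where
  smul_pow : ∀ (c : F) (x : g), p (c • x) = (c ^ 2) • p x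
  ad_pow : ∀ x y : g, ⁅p x, y⁆ = ⁅x, ⁅x, y⁆⁆
  add_pow : ∀ x y : g, p (x + y) = p x + p y + ⁅x, y⁆

/-- An element is 2-nilpotent if some iterate of the 2-map annihilates it. -/
def IsTwoNilpotent {g : Type*} [Zero g] (p : g → g) (x : g) : Prop :=
  ∃ k : ℕ, p^[k] x = 0

/-- A torus of a Lie 2-algebra: a Lie subalgebra closed under the 2-map on which the
2-map is invertible (bijective). -/
def IsTorus (F : Type*) [Field F] {g : Type*} [LieRing g] [LieAlgebra F g]
    (p : g → g) (t : LieSubalgebra F g) : Prop :=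
  (∀ x ∈ t, p x ∈ t) ∧ Set.BijOn p (t : Set g) (t : Set g)

/-- A maximal torus of a Lie 2-algebra. -/
def IsMaxTorus (F : Type*) [Field F] {g : Type*} [LieRing g] [LieAlgebra F g]
    (p : g → g) (t : LieSubalgebra F g) : Prop :=
  IsTorus F p t ∧ ∀ s : LieSubalgebra F g, IsTorus F p s → t ≤ s → s = t

/-- The weight (root) space of a linear functional `lam` on a torus `t`:
`g_lam = {v | [x, v] = lam x • v for all x ∈ t}`. -/
def rootSpace {F : Type*} [Field F] {g : Type*} [LieRing g] [LieAlgebra F g]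
    (t : LieSubalgebra F g) (lam : Module.Dual F t) : Submodule F g where
  carrier := {v | ∀ x : t, ⁅(x : g), v⁆ = lam x • v}
  add_mem' := by
    intro a b ha hb x
    rw [lie_add, ha x, hb x, smul_add]
  zero_mem' := by
    intro x
    rw [lie_zero, smul_zero]
  smul_mem' := by
    intro c v hv x
    rw [lie_smul, hv x, smul_comm]

/-- The set of `t`-roots: nonzero functionals with nonzero root space. -/
def rootSet {F : Type*} [Field F] {g : Type*} [LieRing g] [LieAlgebra F g]
    (t : LieSubalgebra F g) : Set (Module.Dual F t) :=
  {lam | lam ≠ 0 ∧ rootSpace t lam ≠ ⊥}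

/-- The subspace `N(σ, δ) = {x ∈ g_σ : [x, g_σ] ⊆ n and [[x, g_δ], g_{σ+δ}] ⊆ n}`,
given as `Nspace n g_σ g_δ g_{σ+δ}`. -/
def Nspace {F : Type*} [Field F] {g : Type*} [LieRing g] [LieAlgebra F g]
    (n gs gd gsd : Submodule F g) : Submodule F g where
  carrier := {x | x ∈ gs ∧ (∀ y ∈ gs, ⁅x, y⁆ ∈ n) ∧ ∀ z ∈ gd, ∀ w ∈ gsd, ⁅⁅x, z⁆, w⁆ ∈ n}
  add_mem' := by
    intro a b ha hb
    obtain ⟨ha1, ha2, ha3⟩ := ha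
    obtain ⟨hb1, hb2, hb3⟩ := hb
    refine ⟨gs.add_mem ha1 hb1, fun y hy => ?_, fun z hz w hw => ?_⟩
    · rw [add_lie]
      exact n.add_mem (ha2 y hy) (hb2 y hy)
    · rw [add_lie, add_lie]
      exact n.add_mem (ha3 z hz w hw) (hb3 z hz w hw)
  zero_mem' := by
    refine ⟨gs.zero_mem, fun y hy => ?_, fun z hz w hw => ?_⟩
    · rw [zero_lie]; exact n.zero_mem
    · rw [zero_lie, zero_lie]; exact n.zero_mem
  smul_mem' := by
    intro c x hx
    obtain ⟨h1, h2, h3⟩ := hx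
    refine ⟨gs.smul_mem c h1, fun y hy => ?_, fun z hz w hw => ?_⟩
    · rw [smul_lie]; exact n.smul_mem c (h2 y hy)
    · rw [smul_lie, smul_lie]; exact n.smul_mem c (h3 z hz w hw)


section StatementThreeAux

variable {F : Type*} [Field F] {g : Type*} [LieRing g] [LieAlgebra F g]

lemma mem_rootSpace_iff {t : LieSubalgebra F g} {lam : Module.Dual F t} {v : g} :
    v ∈ rootSpace t lam ↔ ∀ x : t, ⁅(x : g), v⁆ = lam x • v := Iff.rfl

lemma lie_mem_rootSpace {t : LieSubalgebra F g} {σ μ : Module.Dual F t} {a v : g}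
    (ha : a ∈ rootSpace t σ) (hv : v ∈ rootSpace t μ) :
    ⁅a, v⁆ ∈ rootSpace t (σ + μ) := by
  intro tt
  rw [leibniz_lie, ha tt, hv tt, smul_lie, lie_smul]
  simp [add_smul]

/-- `(g ∘ f)^(j+1) v = g ((f ∘ g)^j (f v))` for linear maps between two spaces. -/
lemma comp_pow_succ_apply {V W : Type*} [AddCommGroup V] [Module F V]
    [AddCommGroup W] [Module F W] (A : V →ₗ[F] W) (B : W →ₗ[F] V) :
    ∀ (j : ℕ) (v : V), ((B ∘ₗ A) ^ (j + 1)) v = B (((A ∘ₗ B) ^ j) (A v)) := by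
  intro j
  induction j with
  | zero => intro v; simp
  | succ j ih =>
    intro v
    rw [pow_succ, Module.End.mul_apply]
    simp only [LinearMap.comp_apply] at *
    rw [ih (B (A v))]
    conv_rhs => rw [pow_succ, Module.End.mul_apply]
    simp [LinearMap.comp_apply]

end StatementThreeAux

/-- if `g_ξ^{[2]} ⊄ ker η` (with `η` extended to `h = t ⊕ n` by `η|_n = 0`),
then `dim g_η = dim g_{ξ+η}`. -/
theorem statement3
    {F : Type*} [Field F] [IsAlgClosed F] [CharP F 2]
    {g : Type*} [LieRing g] [LieAlgebra F g] [FiniteDimensional F g]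
    (p : g → g) (hp : IsTwoMap F p)
    (t : LieSubalgebra F g) (hmax : IsMaxTorus F p t)
    (n : Submodule F g)
    (hn : ∀ x : g, x ∈ n ↔ x ∈ rootSpace t 0 ∧ IsTwoNilpotent p x)
    (hstd : ∀ x ∈ rootSpace t 0, ∀ y ∈ n, ⁅x, y⁆ ∈ n)
    (hdecomp : rootSpace t 0 = t.toSubmodule ⊔ n)
    (hdisj : Disjoint t.toSubmodule n)
    (ξ η : Module.Dual F t) (hξ : ξ ∈ rootSet t) (hη : η ∈ rootSet t)
    (hnotker : ∃ x ∈ rootSpace t ξ, ∃ s : t, ∃ m ∈ n, p x = (s : g) + m ∧ η s ≠ 0) :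
    Module.finrank F (rootSpace t η) = Module.finrank F (rootSpace t (ξ + η)) := by
  classical
  obtain ⟨hηne, hηr⟩ := hη
  obtain ⟨x, hx, s, m, hm, hpx, hηs⟩ := hnotker
  obtain ⟨hm0, k, hk⟩ : m ∈ rootSpace t 0 ∧ IsTwoNilpotent p m := (hn m).mp hm
  -- char 2 : ξ + (ξ + η) = η
  have hchar : ξ + (ξ + η) = η := by
    ext tt
    show ξ tt + (ξ tt + η tt) = η tt
    rw [← add_assoc, CharTwo.add_self_eq_zero, zero_add]
  set V := rootSpace t η with hV
  set W := rootSpace t (ξ + η) with hW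
  -- the maps A : V → W and B : W → V induced by ad x
  have hAmem : ∀ v : V, ⁅x, (v : g)⁆ ∈ W := fun v => lie_mem_rootSpace hx v.2
  have hBmem : ∀ w : W, ⁅x, (w : g)⁆ ∈ V := by
    intro w
    have := lie_mem_rootSpace hx w.2
    rwa [hchar] at this
  have hNVmem : ∀ v : V, ⁅m, (v : g)⁆ ∈ V := by
    intro v
    have := lie_mem_rootSpace hm0 v.2
    rwa [zero_add] at this
  have hNWmem : ∀ w : W, ⁅m, (w : g)⁆ ∈ W := by
    intro w
    have := lie_mem_rootSpace hm0 w.2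
    rwa [zero_add] at this
  let A : V →ₗ[F] W :=
    { toFun := fun v => ⟨⁅x, (v : g)⁆, hAmem v⟩
      map_add' := fun a b => by simp [Subtype.ext_iff]
      map_smul' := fun c a => by simp [Subtype.ext_iff] }
  let B : W →ₗ[F] V :=
    { toFun := fun w => ⟨⁅x, (w : g)⁆, hBmem w⟩
      map_add' := fun a b => by simp [Subtype.ext_iff]
      map_smul' := fun c a => by simp [Subtype.ext_iff] }
  let NV : Module.End F V :=
    { toFun := fun v => ⟨⁅m, (v : g)⁆, hNVmem v⟩
      map_add' := fun a b => by simp [Subtype.ext_iff]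
      map_smul' := fun c a => by simp [Subtype.ext_iff] }
  let NW : Module.End F W :=
    { toFun := fun w => ⟨⁅m, (w : g)⁆, hNWmem w⟩
      map_add' := fun a b => by simp [Subtype.ext_iff]
      map_smul' := fun c a => by simp [Subtype.ext_iff] }
  -- (ad x)^2 = ad s + ad m
  have hsq : ∀ y : g, ⁅x, ⁅x, y⁆⁆ = ⁅(s : g), y⁆ + ⁅m, y⁆ := by
    intro y
    rw [← hp.ad_pow, hpx, add_lie]
  -- B ∘ A = η s • 1 + NV
  have hBA : B ∘ₗ A = η s • (1 : Module.End F V) + NV := by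
    ext v
    show ⁅x, ⁅x, (v : g)⁆⁆ = _
    rw [hsq, v.2 s]
    rfl
  have hAB : A ∘ₗ B = (ξ + η) s • (1 : Module.End F W) + NW := by
    ext w
    show ⁅x, ⁅x, (w : g)⁆⁆ = _
    rw [hsq, w.2 s]
    rfl
  -- ad m is nilpotent on g
  have hadpow : ∀ j : ℕ, (LieAlgebra.ad F g m) ^ (2 ^ j) = LieAlgebra.ad F g (p^[j] m) := by
    intro j
    induction j with
    | zero => simp
    | succ j ih =>
      have hady : ∀ y : g, LieAlgebra.ad F g (p y) = LieAlgebra.ad F g y * LieAlgebra.ad F g y := by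
        intro y
        ext w
        exact hp.ad_pow y w
      rw [pow_succ, pow_mul, ih, sq, ← hady, Function.iterate_succ_apply']
  have hadnil : (LieAlgebra.ad F g m) ^ (2 ^ k) = 0 := by
    rw [hadpow k, hk]
    ext w
    simp
  -- hence NV and NW are nilpotent
  have hNViter : ∀ (j : ℕ) (v : V), (((NV ^ j) v : V) : g) = ((LieAlgebra.ad F g m) ^ j) (v : g) := by
    intro j
    induction j with
    | zero => intro v; simp
    | succ j ih =>
      intro v
      have h1 : (((NV ^ (j + 1)) v : V) : g) = ⁅m, (((NV ^ j) v : V) : g)⁆ := by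
        rw [pow_succ', Module.End.mul_apply]; rfl
      rw [h1, ih, pow_succ', Module.End.mul_apply]
      rfl
  have hNWiter : ∀ (j : ℕ) (w : W), (((NW ^ j) w : W) : g) = ((LieAlgebra.ad F g m) ^ j) (w : g) := by
    intro j
    induction j with
    | zero => intro w; simp
    | succ j ih =>
      intro w
      have h1 : (((NW ^ (j + 1)) w : W) : g) = ⁅m, (((NW ^ j) w : W) : g)⁆ := by
        rw [pow_succ', Module.End.mul_apply]; rfl
      rw [h1, ih, pow_succ', Module.End.mul_apply]
      rfl
  have hNVnil : NV ^ (2 ^ k) = 0 := by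
    ext v
    have := hNViter (2 ^ k) v
    rw [hadnil] at this
    simpa using this
  have hNWnil : NW ^ (2 ^ k) = 0 := by
    ext w
    have := hNWiter (2 ^ k) w
    rw [hadnil] at this
    simpa using this
  -- B ∘ A is a unit
  have hunit : ∀ (c : F), c ≠ 0 → IsUnit (c • (1 : Module.End F V)) := by
    intro c hc
    have h := (isUnit_iff_ne_zero.mpr hc).map (algebraMap F (Module.End F V))
    rwa [Algebra.algebraMap_eq_smul_one] at h
  have hBAunit : IsUnit (B ∘ₗ A) := by
    rw [hBA]
    exact IsNilpotent.isUnit_add_left_of_commute ⟨2 ^ k, hNVnil⟩ (hunit (η s) hηs)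
      ((Commute.one_right NV).smul_right (η s))
  have hBAbij : Function.Bijective (B ∘ₗ A) := (Module.End.isUnit_iff _).mp hBAunit
  have hAinj : Function.Injective A := by
    have : Function.Injective (⇑B ∘ ⇑A) := by
      rw [← LinearMap.coe_comp]; exact hBAbij.1
    exact Function.Injective.of_comp this
  by_cases hc : (ξ + η) s = 0
  · -- then A ∘ B = NW is nilpotent, so B ∘ A is nilpotent and a unit : contradiction
    exfalso
    have hABnw : A ∘ₗ B = NW := by rw [hAB, hc, zero_smul, zero_add]
    have hBAnil : (B ∘ₗ A) ^ (2 ^ k + 1) = 0 := by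
      ext v
      rw [comp_pow_succ_apply A B (2 ^ k) v, hABnw, hNWnil]
      simp
    have h0unit : IsUnit ((B ∘ₗ A) ^ (2 ^ k + 1)) := hBAunit.pow _
    rw [hBAnil] at h0unit
    have h01 : (0 : Module.End F V) = 1 := isUnit_zero_iff.mp h0unit
    obtain ⟨v, hvV, hv0⟩ := Submodule.exists_mem_ne_zero_of_ne_bot hηr
    apply hv0
    have : ((1 : Module.End F V) ⟨v, hvV⟩ : V) = (0 : Module.End F V) ⟨v, hvV⟩ := by rw [h01]
    simpa [Subtype.ext_iff] using this
  · -- then A ∘ B is a unit too, so A is bijective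
    have hunitW : IsUnit ((ξ + η) s • (1 : Module.End F W)) := by
      have h := (isUnit_iff_ne_zero.mpr hc).map (algebraMap F (Module.End F W))
      rwa [Algebra.algebraMap_eq_smul_one] at h
    have hABunit : IsUnit (A ∘ₗ B) := by
      rw [hAB]
      exact IsNilpotent.isUnit_add_left_of_commute ⟨2 ^ k, hNWnil⟩ hunitW
        ((Commute.one_right NW).smul_right ((ξ + η) s))
    have hABbij : Function.Bijective (A ∘ₗ B) := (Module.End.isUnit_iff _).mp hABunit
    have hAsurj : Function.Surjective A := by
      have : Function.Surjective (⇑A ∘ ⇑B) := by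
        rw [← LinearMap.coe_comp]; exact hABbij.2
      exact Function.Surjective.of_comp this
    exact LinearEquiv.finrank_eq (LinearEquiv.ofBijective A ⟨hAinj, hAsurj⟩)
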